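/- Let (E, 𝔅) be a measurable space and let (𝓙_t)_{t>0} be a family of σ-ideals of 𝔅 that is nondecreasing in t (i.e., 𝓙_s ⊆ 𝓙_t whenever 0 < s ≤ t). Define ν(B) = ⨅{t ∈ (0,∞) : B ∈ 𝓙_t} for measurable B (with the infimum of the empty set equal to ∞). Then ν is a σ-maxitive measure on 𝔅: ν(∅) = 0 and ν(⋃ₙ Bₙ) = ⨆ₙ ν(Bₙ) for every countable family (Bₙ) of measurable sets. -/

import Mathlib

open scoped ENNReal
open Set

/-- A σ-maxitive measure: vanishes on `∅` and turns countable unions of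
measurable sets into suprema. -/
def SigmaMaxitive {E : Type*} [MeasurableSpace E] (ν : Set E → ℝ≥0∞) : Prop :=
  ν ∅ = 0 ∧ ∀ B : ℕ → Set E, (∀ n, MeasurableSet (B n)) →
    ν (⋃ n, B n) = ⨆ n, ν (B n)

/-- A σ-ideal of the σ-algebra: a nonempty collection of measurable sets closed
under countable unions and under measurable subsets. -/
def IsSigmaIdeal {E : Type*} [MeasurableSpace E] (I : Set (Set E)) : Prop :=
  I.Nonempty ∧ (∀ A ∈ I, MeasurableSet A) ∧
    (∀ B : ℕ → Set E, (∀ n, B n ∈ I) → (⋃ n, B n) ∈ I) ∧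
    (∀ A B : Set E, B ∈ I → A ⊆ B → MeasurableSet A → A ∈ I)

/-- `τ` is σ-principal. -/
def SigmaPrincipal {E : Type*} [MeasurableSpace E] (τ : Set E → ℝ≥0∞) : Prop :=
  ∀ I : Set (Set E), IsSigmaIdeal I → ∃ L ∈ I, ∀ S ∈ I, τ (S \ L) = 0

/-- The infimum-over-ideals construction of Nguyen et al.: given a nondecreasing
family `(𝓙_t)_{t ∈ (0,∞)}` of σ-ideals, `B ↦ ⨅ {t ∈ (0,∞) : B ∈ 𝓙_t}` is a
σ-maxitive measure. -/
theorem sigmaMaxitive_of_sigmaIdeal_family {E : Type*} [MeasurableSpace E]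
    (J : ℝ≥0∞ → Set (Set E))
    (hJ : ∀ t ∈ Ioo (0 : ℝ≥0∞) ⊤, IsSigmaIdeal (J t))
    (hmono : ∀ s t : ℝ≥0∞, s ∈ Ioo (0 : ℝ≥0∞) ⊤ → t ∈ Ioo (0 : ℝ≥0∞) ⊤ →
      s ≤ t → J s ⊆ J t) :
    SigmaMaxitive
      (fun B : Set E => sInf {t : ℝ≥0∞ | t ∈ Ioo (0 : ℝ≥0∞) ⊤ ∧ B ∈ J t}) := by
  have hempty : ∀ t ∈ Ioo (0 : ℝ≥0∞) ⊤, (∅ : Set E) ∈ J t := by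
    intro t ht
    obtain ⟨⟨A, hA⟩, hmeas, hunion, hsub⟩ := hJ t ht
    exact hsub ∅ A hA (empty_subset A) MeasurableSet.empty
  constructor
  · simp only
    have : {t : ℝ≥0∞ | t ∈ Ioo (0 : ℝ≥0∞) ⊤ ∧ (∅ : Set E) ∈ J t} = Ioo 0 ⊤ := by
      ext t; exact ⟨fun h => h.1, fun h => ⟨h, hempty t h⟩⟩
    rw [this, csInf_Ioo (by simp : (0 : ℝ≥0∞) < ⊤)]
  · intro B hB
    apply le_antisymm
    · set s := ⨆ n, sInf {t : ℝ≥0∞ | t ∈ Ioo (0 : ℝ≥0∞) ⊤ ∧ B n ∈ J t} with hs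
      by_cases hstop : s = ⊤
      · simp [hstop]
      · have hslt : s < ⊤ := lt_top_iff_ne_top.2 hstop
        have key : ∀ t ∈ Ioo s ⊤,
            sInf {t : ℝ≥0∞ | t ∈ Ioo (0 : ℝ≥0∞) ⊤ ∧ (⋃ n, B n) ∈ J t} ≤ t := by
          intro t ht
          have htIoo : t ∈ Ioo (0 : ℝ≥0∞) ⊤ :=
            ⟨lt_of_le_of_lt (zero_le : (0 : ℝ≥0∞) ≤ s) ht.1, ht.2⟩
          have hn : ∀ n, B n ∈ J t := by
            intro n
            have h1 : sInf {u : ℝ≥0∞ | u ∈ Ioo (0 : ℝ≥0∞) ⊤ ∧ B n ∈ J u} < t :=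
              lt_of_le_of_lt (le_iSup (fun n =>
                sInf {u : ℝ≥0∞ | u ∈ Ioo (0 : ℝ≥0∞) ⊤ ∧ B n ∈ J u}) n) ht.1
            obtain ⟨u, ⟨huIoo, huJ⟩, hut⟩ := sInf_lt_iff.mp h1
            exact hmono u t huIoo htIoo hut.le huJ
          obtain ⟨_, _, hunion, _⟩ := hJ t htIoo
          exact sInf_le ⟨htIoo, hunion B hn⟩
        calc sInf {t : ℝ≥0∞ | t ∈ Ioo (0 : ℝ≥0∞) ⊤ ∧ (⋃ n, B n) ∈ J t}
            ≤ sInf (Ioo s ⊤) := le_sInf key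
          _ = s := csInf_Ioo hslt
    · apply iSup_le
      intro n
      apply sInf_le_sInf
      intro t ⟨htIoo, htJ⟩
      obtain ⟨_, hmeas, _, hsub⟩ := hJ t htIoo
      exact ⟨htIoo, hsub (B n) (⋃ m, B m) htJ (subset_iUnion B n) (hB n)⟩
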